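/- Assume μ_1 − λ ≥ ρ_1 > 0, that at least three indices j ∉ C satisfy a_j ∈ S_1, and that for every j ∉ C: if a_j ∈ S_h then ρ_h > ρ_1/2 and a_j ≤ μ_h − λ + ρ_h − ρ_1/2, and if a_j ∈ F_h then a_j ≥ μ_h. Then the PC-lifted cover inequality ∑_{j∈C} x_j + ∑_{j∉C} g_0(a_j) x_j ≤ |C| − 1 is valid for P and defines a facet of conv(P); i.e., it is satisfied by every x ∈ P and there exist n affinely independent points x ∈ P satisfying it with equality. -/

import Mathlib

/-- `μ_h = a_1 + ⋯ + a_h` (as a real number). -/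
noncomputable def mu (a : ℕ → ℕ) (h : ℕ) : ℝ := ∑ i ∈ Finset.Icc 1 h, (a i : ℝ)

/-- `λ = μ_t − b`, the excess weight of the cover. -/
noncomputable def lam (a : ℕ → ℕ) (t b : ℕ) : ℝ := mu a t - (b : ℝ)

/-- `ρ_h = max(0, a_{h+1} − (a_1 − λ))`. -/
noncomputable def rho (a : ℕ → ℕ) (t b : ℕ) (h : ℕ) : ℝ :=
  max 0 ((a (h + 1) : ℝ) - ((a 1 : ℝ) - lam a t b))

/-- `w_k(x) = k·x + (1 − k·ρ₁)/2`, where `r` stands for `ρ₁`. -/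
noncomputable def wk (r k x : ℝ) : ℝ := k * x + (1 - k * r) / 2

lemma mu_zero (a : ℕ → ℕ) : mu a 0 = 0 := by simp [mu]

lemma mu_succ (a : ℕ → ℕ) (h : ℕ) : mu a (h + 1) = mu a h + a (h + 1) := by
  simp [mu, Finset.sum_Icc_succ_top (Nat.one_le_iff_ne_zero.mpr (Nat.succ_ne_zero h))]

lemma mu_one (a : ℕ → ℕ) : mu a 1 = a 1 := by
  rw [show (1:ℕ) = 0 + 1 from rfl, mu_succ, mu_zero]; simp

lemma mu_mono (a : ℕ → ℕ) : Monotone (mu a) := by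
  intro p q hpq
  exact Finset.sum_le_sum_of_subset_of_nonneg (Finset.Icc_subset_Icc_right hpq)
    (fun i _ _ => by positivity)

lemma mu_nonneg (a : ℕ → ℕ) (h : ℕ) : 0 ≤ mu a h := by
  rw [← mu_zero a]; exact mu_mono a (Nat.zero_le h)

/-- window bound: for `1 ≤ p`, `p + H ≤ t`:  μ_{p+H} − μ_p ≤ μ_{H+1} − μ_1. -/
lemma mu_window (t : ℕ) (a : ℕ → ℕ) (hmono : ∀ i j, 1 ≤ i → i ≤ j → j ≤ t → a j ≤ a i)
    (p H : ℕ) (hp : 1 ≤ p) (hpt : p + H ≤ t) :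
    mu a (p + H) - mu a p ≤ mu a (H + 1) - mu a 1 := by
  induction H with
  | zero => simp
  | succ H ih =>
    have h1 : mu a (p + (H+1)) = mu a (p + H) + a (p + H + 1) := by
      rw [show p + (H+1) = (p+H) + 1 from rfl, mu_succ]
    have h2 : mu a (H + 1 + 1) = mu a (H + 1) + a (H + 2) := by
      rw [mu_succ]
    have h3 : (a (p + H + 1) : ℝ) ≤ a (H + 2) := by
      have := hmono (H + 2) (p + H + 1) (by omega) (by omega) (by omega)
      exact_mod_cast this
    have := ih (by omega)
    rw [h1, h2]; linarith

/-- subadditivity: `p + q ≤ t` implies `μ_{p+q} ≤ μ_p + μ_q`. -/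
lemma mu_subadd (t : ℕ) (a : ℕ → ℕ) (hmono : ∀ i j, 1 ≤ i → i ≤ j → j ≤ t → a j ≤ a i)
    (p q : ℕ) (hpt : p + q ≤ t) :
    mu a (p + q) ≤ mu a p + mu a q := by
  induction q with
  | zero => simp [mu_zero]
  | succ q ih =>
    have h1 : mu a (p + (q+1)) = mu a (p + q) + a (p + q + 1) := by
      rw [show p + (q+1) = (p+q) + 1 from rfl, mu_succ]
    have h2 : mu a (q + 1) = mu a q + a (q + 1) := mu_succ a q
    have h3 : (a (p + q + 1) : ℝ) ≤ a (q + 1) := by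
      have := hmono (q + 1) (p + q + 1) (by omega) (by omega) (by omega)
      exact_mod_cast this
    have := ih (by omega)
    rw [h1, h2]; linarith

/-- tail sum: for `p ≤ q`: `∑_{i ∈ Icc (p+1) q} a i = μ_q − μ_p`. -/
lemma sum_tail (a : ℕ → ℕ) (p q : ℕ) (hpq : p ≤ q) :
    ∑ i ∈ Finset.Icc (p + 1) q, (a i : ℝ) = mu a q - mu a p := by
  have h1 : Finset.Icc (p+1) q = Finset.Ioc p q := Finset.Icc_add_one_left_eq_Ioc p q
  have h2 : Finset.Icc 1 p = Finset.Ioc 0 p := Finset.Icc_add_one_left_eq_Ioc 0 p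
  have h3 : Finset.Icc 1 q = Finset.Ioc 0 q := Finset.Icc_add_one_left_eq_Ioc 0 q
  have := Finset.sum_Ioc_consecutive (fun i => (a i : ℝ)) (Nat.zero_le p) hpq
  simp only [mu, h1, h2, h3]
  linarith

/-- Any subset of the cover has weight at most `μ_{card}`. -/
lemma cover_subset_sum (t : ℕ) (a : ℕ → ℕ) (hmono : ∀ i j, 1 ≤ i → i ≤ j → j ≤ t → a j ≤ a i)
    (D : Finset ℕ) (hD : D ⊆ Finset.Icc 1 t) :
    ∑ i ∈ D, (a i : ℝ) ≤ mu a D.card := by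
  induction D using Finset.strongInduction with
  | _ D ih =>
    rcases D.eq_empty_or_nonempty with rfl | hne
    · simp [mu_zero]
    · set m := D.max' hne with hm
      have hmD : m ∈ D := D.max'_mem hne
      have hmIcc : m ∈ Finset.Icc 1 t := hD hmD
      have hm1 : 1 ≤ m := (Finset.mem_Icc.mp hmIcc).1
      have hmt : m ≤ t := (Finset.mem_Icc.mp hmIcc).2
      have hsub : D ⊆ Finset.Icc 1 m := by
        intro d hd
        rw [Finset.mem_Icc]
        exact ⟨(Finset.mem_Icc.mp (hD hd)).1, D.le_max' d hd⟩
      have hcard : D.card ≤ m := by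
        have := Finset.card_le_card hsub
        simpa using this
      have hcard1 : 1 ≤ D.card := Finset.card_pos.mpr hne
      have ham : (a m : ℝ) ≤ a D.card := by
        exact_mod_cast hmono D.card m hcard1 hcard hmt
      have herase := ih (D.erase m) (Finset.erase_ssubset hmD)
        (fun x hx => hD (Finset.mem_of_mem_erase hx))
      rw [Finset.card_erase_of_mem hmD] at herase
      have hsum : ∑ i ∈ D, (a i : ℝ) = a m + ∑ i ∈ D.erase m, (a i : ℝ) :=
        (Finset.add_sum_erase D _ hmD).symm
      have hmu : mu a D.card = mu a (D.card - 1) + a ((D.card - 1) + 1) := by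
        rw [← mu_succ]; congr 1; omega
      rw [hsum, hmu]
      have : ((D.card - 1) + 1) = D.card := by omega
      rw [this]
      linarith

lemma rho_nonneg (a : ℕ → ℕ) (t b h : ℕ) : 0 ≤ rho a t b h := le_max_left _ _

lemma rho_zero (a : ℕ → ℕ) (t b : ℕ) (hl : 0 ≤ lam a t b) : rho a t b 0 = lam a t b := by
  rw [rho, max_eq_right (by simp; linarith)]
  simp

lemma rho_pos_eq (a : ℕ → ℕ) (t b h : ℕ) (hp : 0 < rho a t b h) :
    rho a t b h = (a (h + 1) : ℝ) - (a 1 : ℝ) + lam a t b := by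
  rcases max_cases (0:ℝ) ((a (h + 1) : ℝ) - ((a 1 : ℝ) - lam a t b)) with ⟨he, _⟩ | ⟨he, _⟩
  · rw [rho] at hp; rw [he] at hp; exact absurd hp (lt_irrefl 0)
  · rw [rho, he]; ring

/-- classification of a point of `(0, μ_t − λ]` into an `F` or `S` interval. -/
lemma classify (t b : ℕ) (a : ℕ → ℕ) (ht : 1 ≤ t) (hl : 0 < lam a t b) (z : ℝ)
    (hz0 : 0 < z) (hzb : z ≤ mu a t - lam a t b) :
    ∃ h, h ≤ t - 1 ∧
      ((mu a h - lam a t b + rho a t b h < z ∧ z ≤ mu a (h + 1) - lam a t b) ∨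
       (1 ≤ h ∧ mu a h - lam a t b < z ∧ z ≤ mu a h - lam a t b + rho a t b h)) := by
  classical
  have hP : ∃ h, z ≤ mu a (h + 1) - lam a t b := by
    refine ⟨t - 1, ?_⟩
    have : t - 1 + 1 = t := by omega
    rw [this]; exact hzb
  set h0 := Nat.find hP with hh0
  have hfind : z ≤ mu a (h0 + 1) - lam a t b := Nat.find_spec hP
  have hht : h0 ≤ t - 1 := Nat.find_le (by
    have : t - 1 + 1 = t := by omega
    rw [this]; exact hzb)
  refine ⟨h0, hht, ?_⟩
  rcases Nat.eq_zero_or_pos h0 with h00 | h0pos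
  · left
    constructor
    · rw [h00]
      have h1 : mu a 0 = 0 := by simp [mu]
      have h2 : rho a t b 0 = lam a t b := rho_zero a t b (le_of_lt hl)
      rw [h1, h2]; linarith
    · exact hfind
  · -- h0 = h + 1 for some h; minimality gives z > mu a h0 - lam
    have hlt : mu a h0 - lam a t b < z := by
      have := Nat.find_min hP (m := h0 - 1) (by omega)
      push_neg at this
      have he : h0 - 1 + 1 = h0 := by omega
      rw [he] at this
      linarith
    by_cases hS : z ≤ mu a h0 - lam a t b + rho a t b h0
    · right; exact ⟨h0pos, hlt, hS⟩
    · left; exact ⟨by linarith [not_le.mp hS], hfind⟩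

lemma keyV (t n b : ℕ) (a : ℕ → ℕ) (gPC : ℝ → ℝ)
    (ht : 2 ≤ t)
    (hmono : ∀ i j, 1 ≤ i → i ≤ j → j ≤ t → a j ≤ a i)
    (hlam_pos : 0 < lam a t b)
    (hlam_le : ∀ i, 1 ≤ i → i ≤ t → lam a t b ≤ (a i : ℝ))
    (hmain2 : (a 2 : ℝ) + 2 * lam a t b ≤ 2 * (a 1 : ℝ))
    (hPF : ∀ h : ℕ, h ≤ t - 1 → ∀ z : ℝ,
      mu a h - lam a t b + rho a t b h < z → z ≤ mu a (h + 1) - lam a t b →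
      gPC z = (h : ℝ))
    (hPS : ∀ h : ℕ, 1 ≤ h → h ≤ t - 1 → ∀ z : ℝ,
      mu a h - lam a t b < z → z ≤ mu a h - lam a t b + rho a t b h →
      gPC z = (h : ℝ) - 1 / 2)
    (hFcond : ∀ j, t + 1 ≤ j → j ≤ n → ∀ h : ℕ, h ≤ t - 1 →
      mu a h - lam a t b + rho a t b h < (a j : ℝ) →
      (a j : ℝ) ≤ mu a (h + 1) - lam a t b →
      mu a h ≤ (a j : ℝ))
    (hposn : ∀ i, 1 ≤ i → i ≤ n → 0 < a i)
    (halb : ∀ i, 1 ≤ i → i ≤ n → a i ≤ b) :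
    ∀ m s (U : Finset ℕ), U.card ≤ m → 1 ≤ s → s ≤ t →
      (∀ j ∈ U, t + 1 ≤ j ∧ j ≤ n) →
      (∑ j ∈ U, (a j : ℝ)) ≤ mu a s - lam a t b →
      ∑ j ∈ U, gPC (a j) ≤ (s : ℝ) - 1 := by
  intro m
  induction m with
  | zero =>
    intro s U hcard hs1 hst hU hw
    have : U = ∅ := Finset.card_eq_zero.mp (Nat.le_zero.mp hcard)
    subst this
    simp only [Finset.sum_empty]
    have : (1:ℝ) ≤ s := by exact_mod_cast hs1
    linarith
  | succ m ih =>
    intro s U hcard hs1 hst hU hw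
    rcases U.eq_empty_or_nonempty with rfl | hne
    · simp only [Finset.sum_empty]
      have : (1:ℝ) ≤ s := by exact_mod_cast hs1
      linarith
    -- every weight is nonnegative
    have hanon : ∀ j ∈ U, (0:ℝ) ≤ (a j : ℝ) := fun j _ => by positivity
    by_cases hF : ∃ j ∈ U, ∃ h, h ≤ t - 1 ∧
        mu a h - lam a t b + rho a t b h < (a j : ℝ) ∧ (a j : ℝ) ≤ mu a (h + 1) - lam a t b
    · -- F case
      obtain ⟨j, hjU, h, hht, hF1, hF2⟩ := hF
      obtain ⟨hjt, hjn⟩ := hU j hjU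
      have hgj : gPC (a j) = (h : ℝ) := hPF h hht _ hF1 hF2
      have hmuh : mu a h ≤ (a j : ℝ) := hFcond j hjt hjn h hht hF1 hF2
      have hjle : (a j : ℝ) ≤ ∑ i ∈ U, (a i : ℝ) := Finset.single_le_sum hanon hjU
      have hhs : h < s := by
        by_contra hc
        push_neg at hc
        have h1 : mu a s ≤ mu a h := mu_mono a hc
        have h2 : 0 ≤ rho a t b h := rho_nonneg a t b h
        linarith
      have hsplit : ∑ i ∈ U, (a i : ℝ) = (a j : ℝ) + ∑ i ∈ U.erase j, (a i : ℝ) :=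
        (Finset.add_sum_erase U _ hjU).symm
      have hsub : mu a s ≤ mu a h + mu a (s - h) := by
        have := mu_subadd t a hmono h (s - h) (by omega)
        have he : h + (s - h) = s := by omega
        rw [he] at this; exact this
      have hrest : ∑ i ∈ U.erase j, (a i : ℝ) ≤ mu a (s - h) - lam a t b := by
        have := hw
        rw [hsplit] at this
        linarith
      have hihres := ih (s - h) (U.erase j)
        (by rw [Finset.card_erase_of_mem hjU]; omega)
        (by omega) (by omega)
        (fun i hi => hU i (Finset.mem_of_mem_erase hi)) hrest
      have hgsplit : ∑ i ∈ U, gPC (a i) = gPC (a j) + ∑ i ∈ U.erase j, gPC (a i) :=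
        (Finset.add_sum_erase U _ hjU).symm
      rw [hgsplit, hgj]
      have hcast : ((s - h : ℕ) : ℝ) = (s : ℝ) - (h : ℝ) := by
        have : h ≤ s := le_of_lt hhs
        push_cast [Nat.cast_sub this]; ring
      rw [hcast] at hihres
      linarith
    · -- all S case
      push_neg at hF
      have hSall : ∀ j ∈ U, ∃ h, 1 ≤ h ∧ h ≤ t - 1 ∧
          mu a h - lam a t b < (a j : ℝ) ∧ (a j : ℝ) ≤ mu a h - lam a t b + rho a t b h := by
        intro j hjU
        obtain ⟨hjt, hjn⟩ := hU j hjU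
        have h0 : 0 < a j := hposn j (by omega) hjn
        have hb : (a j : ℝ) ≤ mu a t - lam a t b := by
          have := halb j (by omega) hjn
          have hc : ((a j : ℕ) : ℝ) ≤ (b : ℝ) := by exact_mod_cast this
          simp only [lam]; linarith
        obtain ⟨h, hht, hcl⟩ := classify t b a (by omega) hlam_pos (a j)
          (by exact_mod_cast h0) hb
        rcases hcl with hFj | ⟨hh1, hS1, hS2⟩
        · exfalso
          have := hF j hjU h hht hFj.1
          linarith [hFj.2]
        · exact ⟨h, hh1, hht, hS1, hS2⟩
      rcases eq_or_lt_of_le (Finset.one_le_card.mpr hne) with hone | htwo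
      · -- exactly one element
        obtain ⟨j, hUj⟩ := Finset.card_eq_one.mp hone.symm
        subst hUj
        obtain ⟨h, hh1, hht, hS1, hS2⟩ := hSall j (Finset.mem_singleton_self j)
        have hgj : gPC (a j) = (h : ℝ) - 1/2 := hPS h hh1 hht _ hS1 hS2
        simp only [Finset.sum_singleton] at hw ⊢
        rw [hgj]
        have hhs : h < s := by
          by_contra hc
          push_neg at hc
          have h1 : mu a s ≤ mu a h := mu_mono a hc
          linarith
        have : (h : ℝ) + 1 ≤ (s : ℝ) := by exact_mod_cast hhs
        linarith
      · -- at least two elements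
        obtain ⟨j, hjU⟩ := hne
        have hne2 : (U.erase j).Nonempty := by
          rw [← Finset.card_pos, Finset.card_erase_of_mem hjU]; omega
        obtain ⟨j', hj'e⟩ := hne2
        have hj'U : j' ∈ U := Finset.mem_of_mem_erase hj'e
        have hjj' : j' ≠ j := Finset.ne_of_mem_erase hj'e
        obtain ⟨h, hh1, hht, hS1, hS2⟩ := hSall j hjU
        obtain ⟨h', hh1', hht', hS1', hS2'⟩ := hSall j' hj'U
        have hgj : gPC (a j) = (h : ℝ) - 1/2 := hPS h hh1 hht _ hS1 hS2
        have hgj' : gPC (a j') = (h' : ℝ) - 1/2 := hPS h' hh1' hht' _ hS1' hS2'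
        -- pair weight below total
        have hsplit : ∑ i ∈ U, (a i : ℝ)
            = (a j : ℝ) + ((a j' : ℝ) + ∑ i ∈ (U.erase j).erase j', (a i : ℝ)) := by
          rw [← Finset.add_sum_erase U _ hjU, ← Finset.add_sum_erase (U.erase j) _ hj'e]
        have hrest_nonneg : (0:ℝ) ≤ ∑ i ∈ (U.erase j).erase j', (a i : ℝ) :=
          Finset.sum_nonneg (fun i _ => by positivity)
        have hmu1 : mu a 1 = (a 1 : ℝ) := mu_one a
        have hlam1 : lam a t b ≤ (a 1 : ℝ) := hlam_le 1 le_rfl (by omega)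
        -- h + h' ≤ s
        have hhs : h + h' ≤ s := by
          by_contra hc
          push_neg at hc
          have hkey : mu a s + lam a t b ≤ mu a h + mu a h' := by
            rcases le_or_gt s h with hsh | hsh
            · have h1 : mu a s ≤ mu a h := mu_mono a hsh
              have h2 : mu a 1 ≤ mu a h' := mu_mono a hh1'
              linarith
            · rcases le_or_gt s h' with hsh' | hsh'
              · have h1 : mu a s ≤ mu a h' := mu_mono a hsh'
                have h2 : mu a 1 ≤ mu a h := mu_mono a hh1
                linarith
              · have h1 : mu a s ≤ mu a h + mu a (s - h) := by
                  have := mu_subadd t a hmono h (s - h) (by omega)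
                  have he : h + (s - h) = s := by omega
                  rw [he] at this; exact this
                have h2 : mu a (s - h) ≤ mu a (h' - 1) := mu_mono a (by omega)
                have h3 : mu a h' = mu a (h' - 1) + (a h' : ℝ) := by
                  have := mu_succ a (h' - 1)
                  have he : h' - 1 + 1 = h' := by omega
                  rw [he] at this; exact this
                have h4 : lam a t b ≤ (a h' : ℝ) := hlam_le h' hh1' (by omega)
                linarith
          linarith
        set H := h + h' - 1 with hH
        have hH1 : H + 1 = h + h' := by omega
        have hsH : 1 ≤ s - H := by omega
        have hwin : mu a s - mu a (s - H) ≤ mu a (H + 1) - mu a 1 := by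
          have := mu_window t a hmono (s - H) H hsH (by omega)
          have he : s - H + H = s := by omega
          rw [he] at this; exact this
        have hwin2 : mu a (h + h') - mu a h ≤ mu a (h' + 1) - mu a 1 :=
          mu_window t a hmono h h' hh1 (by omega)
        have hsucc : mu a (h' + 1) = mu a h' + (a (h' + 1) : ℝ) := mu_succ a h'
        have ha2 : (a (h' + 1) : ℝ) ≤ (a 2 : ℝ) := by
          exact_mod_cast hmono 2 (h' + 1) (by omega) (by omega) (by omega)
        -- rest bound
        have hrest : ∑ i ∈ (U.erase j).erase j', (a i : ℝ) ≤ mu a (s - H) - lam a t b := by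
          rw [hH1] at hwin
          have : mu a s - mu a (s - H) ≤ mu a h + mu a h' - 2 * lam a t b := by linarith
          rw [hsplit] at hw
          linarith
        have hihres := ih (s - H) ((U.erase j).erase j')
          (by
            rw [Finset.card_erase_of_mem hj'e, Finset.card_erase_of_mem hjU]
            omega)
          hsH (by omega)
          (fun i hi => hU i (Finset.mem_of_mem_erase (Finset.mem_of_mem_erase hi))) hrest
        have hgsplit : ∑ i ∈ U, gPC (a i)
            = gPC (a j) + (gPC (a j') + ∑ i ∈ (U.erase j).erase j', gPC (a i)) := by
          rw [← Finset.add_sum_erase U _ hjU, ← Finset.add_sum_erase (U.erase j) _ hj'e]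
        rw [hgsplit, hgj, hgj']
        have hcast : ((s - H : ℕ) : ℝ) = (s : ℝ) - ((h:ℝ) + (h':ℝ) - 1) := by
          have h1 : H ≤ s := by omega
          have : ((s - H : ℕ) : ℝ) = (s : ℝ) - (H : ℝ) := by
            push_cast [Nat.cast_sub h1]; ring
          rw [this, hH]
          have : ((h + h' - 1 : ℕ) : ℝ) = (h : ℝ) + (h' : ℝ) - 1 := by
            push_cast [Nat.cast_sub (by omega : 1 ≤ h + h')]; ring
          rw [this]
        rw [hcast] at hihres
        linarith

lemma sum_zero_one (n : ℕ) (x : Fin n → ℝ) (hx : ∀ j, x j = 0 ∨ x j = 1) (w : Fin n → ℝ) :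
    ∑ j : Fin n, w j * x j = ∑ j ∈ Finset.univ.filter (fun j => x j = 1), w j := by
  rw [Finset.sum_filter]
  apply Finset.sum_congr rfl
  intro j _
  rcases hx j with h | h <;> simp [h]

lemma sum_to_nat (n : ℕ) (T : Finset (Fin n)) (f : ℕ → ℝ) :
    ∑ j ∈ T, f (j.val + 1) = ∑ k ∈ T.image (fun j : Fin n => j.val + 1), f k := by
  rw [Finset.sum_image]
  intro i _ j _ hij
  exact Fin.val_injective (by simp only at hij; omega)

lemma indic_sum (n : ℕ) (K : Finset ℕ) (hK : ∀ k ∈ K, 1 ≤ k ∧ k ≤ n) (g : ℕ → ℝ) :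
    ∑ j : Fin n, g (j.val + 1) * (if (j.val + 1) ∈ K then (1:ℝ) else 0) = ∑ k ∈ K, g k := by
  classical
  have h1 : ∀ j : Fin n, g (j.val + 1) * (if (j.val + 1) ∈ K then (1:ℝ) else 0)
      = if (j.val + 1) ∈ K then g (j.val + 1) else 0 := by
    intro j; split <;> simp
  rw [Finset.sum_congr rfl (fun j _ => h1 j), ← Finset.sum_filter]
  apply Finset.sum_bij (i := fun (j : Fin n) _ => j.val + 1)
  · intro j hj
    exact (Finset.mem_filter.mp hj).2
  · intro i hi j hj hij
    exact Fin.val_injective (by omega)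
  · intro k hk
    obtain ⟨hk1, hkn⟩ := hK k hk
    refine ⟨⟨k - 1, by omega⟩, Finset.mem_filter.mpr ⟨Finset.mem_univ _, ?_⟩, by simp; omega⟩
    simpa using (show k - 1 + 1 = k by omega) ▸ hk
  · intro j hj
    rfl

set_option maxHeartbeats 2000000 in
/-- Under the stated sufficient conditions, the PC-lifted cover
inequality is valid for `P` and defines a facet of `conv(P)`: it is satisfied by
every point of `P`, and there exist `n` affinely independent points of `P`
satisfying it with equality. -/
theorem pc_lifting_facet_defining
    (t n b : ℕ) (a : ℕ → ℕ) (gPC : ℝ → ℝ)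
    (ht : 2 ≤ t)
    (hpos : ∀ i, 1 ≤ i → i ≤ t → 0 < a i)
    (hmono : ∀ i j, 1 ≤ i → i ≤ j → j ≤ t → a j ≤ a i)
    (hcover : (b : ℝ) < mu a t)
    (hmin : mu a t - (a t : ℝ) ≤ (b : ℝ))
    (hrho1 : 0 < rho a t b 1)
    (htn : t < n)
    (hposn : ∀ i, 1 ≤ i → i ≤ n → 0 < a i)
    (halb : ∀ i, 1 ≤ i → i ≤ n → a i ≤ b)
    (hmain : rho a t b 1 ≤ mu a 1 - lam a t b)
    (hP0 : gPC 0 = 0)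
    (hPF : ∀ h : ℕ, h ≤ t - 1 → ∀ z : ℝ,
      mu a h - lam a t b + rho a t b h < z → z ≤ mu a (h + 1) - lam a t b →
      gPC z = (h : ℝ))
    (hPS : ∀ h : ℕ, 1 ≤ h → h ≤ t - 1 → ∀ z : ℝ,
      mu a h - lam a t b < z → z ≤ mu a h - lam a t b + rho a t b h →
      gPC z = (h : ℝ) - 1 / 2)
    (hthree : 3 ≤ ((Finset.Icc (t + 1) n).filter (fun j =>
      mu a 1 - lam a t b < (a j : ℝ) ∧
      (a j : ℝ) ≤ mu a 1 - lam a t b + rho a t b 1)).card)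
    (hScond : ∀ j, t + 1 ≤ j → j ≤ n → ∀ h : ℕ, 1 ≤ h → h ≤ t - 1 →
      mu a h - lam a t b < (a j : ℝ) →
      (a j : ℝ) ≤ mu a h - lam a t b + rho a t b h →
      rho a t b 1 / 2 < rho a t b h ∧
      (a j : ℝ) ≤ mu a h - lam a t b + rho a t b h - rho a t b 1 / 2)
    (hFcond : ∀ j, t + 1 ≤ j → j ≤ n → ∀ h : ℕ, h ≤ t - 1 →
      mu a h - lam a t b + rho a t b h < (a j : ℝ) →
      (a j : ℝ) ≤ mu a (h + 1) - lam a t b →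
      mu a h ≤ (a j : ℝ)) :
    (∀ x : Fin n → ℝ, (∀ j, x j = 0 ∨ x j = 1) →
      (∑ j : Fin n, (a ((j : ℕ) + 1) : ℝ) * x j) ≤ (b : ℝ) →
      (∑ j : Fin n,
        (if (j : ℕ) + 1 ≤ t then 1 else gPC (a ((j : ℕ) + 1))) * x j) ≤ (t : ℝ) - 1) ∧
    (∃ xs : Fin n → (Fin n → ℝ), AffineIndependent ℝ xs ∧
      ∀ i : Fin n, (∀ j, xs i j = 0 ∨ xs i j = 1) ∧
        (∑ j : Fin n, (a ((j : ℕ) + 1) : ℝ) * xs i j) ≤ (b : ℝ) ∧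
        (∑ j : Fin n,
          (if (j : ℕ) + 1 ≤ t then 1 else gPC (a ((j : ℕ) + 1))) * xs i j)
            = (t : ℝ) - 1) := by
  classical
  -- basic facts
  have hlam_pos : 0 < lam a t b := sub_pos.mpr hcover
  have hlamt : lam a t b ≤ (a t : ℝ) := by rw [lam]; linarith
  have hlam_le : ∀ i, 1 ≤ i → i ≤ t → lam a t b ≤ (a i : ℝ) := by
    intro i h1 h2
    have : (a t : ℝ) ≤ a i := by exact_mod_cast hmono i t h1 h2 le_rfl
    linarith
  have hmu1 : mu a 1 = (a 1 : ℝ) := mu_one a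
  have hrho1eq : rho a t b 1 = (a 2 : ℝ) - (a 1 : ℝ) + lam a t b := rho_pos_eq a t b 1 hrho1
  have hmain2 : (a 2 : ℝ) + 2 * lam a t b ≤ 2 * (a 1 : ℝ) := by
    rw [hrho1eq] at hmain; rw [hmu1] at hmain; linarith
  have hbmu : (b : ℝ) = mu a t - lam a t b := by rw [lam]; ring
  -- the coefficient function
  set c : ℕ → ℝ := fun k => if k ≤ t then (1:ℝ) else gPC (a k) with hc
  constructor
  · -- validity
    intro x hx hwt
    set T := Finset.univ.filter (fun j => x j = 1) with hT
    set T' := T.image (fun j : Fin n => j.val + 1) with hT'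
    have hT'sub : ∀ k ∈ T', 1 ≤ k ∧ k ≤ n := by
      intro k hk
      obtain ⟨j, _, hj⟩ := Finset.mem_image.mp hk
      have := j.isLt
      omega
    have hstep1 : ∀ w : Fin n → ℝ, ∑ j : Fin n, w j * x j = ∑ j ∈ T, w j :=
      fun w => sum_zero_one n x hx w
    have hstep2 : ∀ f : ℕ → ℝ, ∑ j ∈ T, f (j.val + 1) = ∑ k ∈ T', f k :=
      fun f => sum_to_nat n T f
    set K := T'.filter (fun k => k ≤ t) with hK
    set U := T'.filter (fun k => ¬ k ≤ t) with hU
    have hKU : ∀ f : ℕ → ℝ, ∑ k ∈ T', f k = ∑ k ∈ K, f k + ∑ k ∈ U, f k :=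
      fun f => (Finset.sum_filter_add_sum_filter_not T' _ f).symm
    have hKsub : K ⊆ Finset.Icc 1 t := by
      intro k hk
      obtain ⟨hkT, hkt⟩ := Finset.mem_filter.mp hk
      exact Finset.mem_Icc.mpr ⟨(hT'sub k hkT).1, hkt⟩
    have hUprop : ∀ j ∈ U, t + 1 ≤ j ∧ j ≤ n := by
      intro k hk
      obtain ⟨hkT, hkt⟩ := Finset.mem_filter.mp hk
      exact ⟨by omega, (hT'sub k hkT).2⟩
    have hwT' : ∑ k ∈ T', (a k : ℝ) ≤ (b : ℝ) := by
      have h1 := hstep1 (fun j => (a (j.val + 1) : ℝ))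
      have h2 := hstep2 (fun k => (a k : ℝ))
      calc ∑ k ∈ T', (a k : ℝ) = ∑ j : Fin n, (a (j.val + 1) : ℝ) * x j := by rw [h1, h2]
        _ ≤ (b : ℝ) := hwt
    have hUnonneg : (0:ℝ) ≤ ∑ k ∈ U, (a k : ℝ) := Finset.sum_nonneg (fun i _ => by positivity)
    have hKnonneg : (0:ℝ) ≤ ∑ k ∈ K, (a k : ℝ) := Finset.sum_nonneg (fun i _ => by positivity)
    -- cover part bound
    have hDsum : ∑ i ∈ Finset.Icc 1 t \ K, (a i : ℝ) + ∑ i ∈ K, (a i : ℝ) = mu a t := by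
      rw [Finset.sum_sdiff hKsub]; rfl
    have hDle : ∑ i ∈ Finset.Icc 1 t \ K, (a i : ℝ) ≤ mu a (t - K.card) := by
      have h1 := cover_subset_sum t a hmono (Finset.Icc 1 t \ K) (Finset.sdiff_subset)
      have h2 : (Finset.Icc 1 t \ K).card = t - K.card := by
        rw [Finset.card_sdiff_of_subset hKsub, Nat.card_Icc]; omega
      rw [h2] at h1; exact h1
    have hKw : mu a t - mu a (t - K.card) ≤ ∑ k ∈ K, (a k : ℝ) := by linarith
    have hkt : K.card < t := by
      by_contra hcon
      push_neg at hcon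
      have hcT : t ≤ K.card := hcon
      have hKeq : K = Finset.Icc 1 t := by
        apply (Finset.eq_of_subset_of_card_le hKsub ?_).symm.symm
        rw [Nat.card_Icc]; omega
      have : ∑ k ∈ K, (a k : ℝ) = mu a t := by rw [hKeq]; rfl
      have htot := hKU (fun k => (a k : ℝ))
      rw [this] at htot
      linarith [hwT', htot]
    have hUw : ∑ k ∈ U, (a k : ℝ) ≤ mu a (t - K.card) - lam a t b := by
      have htot := hKU (fun k => (a k : ℝ))
      rw [hbmu] at hwT'
      linarith
    have hUg : ∑ k ∈ U, gPC (a k) ≤ ((t - K.card : ℕ) : ℝ) - 1 :=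
      keyV t n b a gPC ht hmono hlam_pos hlam_le hmain2 hPF hPS hFcond hposn halb
        U.card (t - K.card) U le_rfl (by omega) (by omega) hUprop hUw
    -- put it together
    have hval : ∑ j : Fin n, c (j.val + 1) * x j = ∑ k ∈ K, c k + ∑ k ∈ U, c k := by
      rw [hstep1 (fun j => c (j.val + 1)), hstep2 c, hKU c]
    have hKc : ∑ k ∈ K, c k = (K.card : ℝ) := by
      rw [Finset.sum_congr rfl (fun k hk => by
        simp only [hc]
        rw [if_pos (Finset.mem_filter.mp hk).2])]
      simp
    have hUc : ∑ k ∈ U, c k = ∑ k ∈ U, gPC (a k) := by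
      apply Finset.sum_congr rfl
      intro k hk
      simp only [hc]
      rw [if_neg (Finset.mem_filter.mp hk).2]
    have hfin : ∑ j : Fin n, c (j.val + 1) * x j ≤ (t : ℝ) - 1 := by
      rw [hval, hKc, hUc]
      have hcast : ((t - K.card : ℕ) : ℝ) = (t : ℝ) - (K.card : ℝ) := by
        push_cast [Nat.cast_sub (le_of_lt hkt)]; ring
      rw [hcast] at hUg
      linarith
    exact hfin
  · -- facet part
    -- extract three distinct S₁ items
    set Sf := (Finset.Icc (t + 1) n).filter (fun j =>
      mu a 1 - lam a t b < (a j : ℝ) ∧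
      (a j : ℝ) ≤ mu a 1 - lam a t b + rho a t b 1) with hSf
    have hSf1 : Sf.Nonempty := by rw [← Finset.card_pos]; omega
    obtain ⟨j1, hj1⟩ := hSf1
    have hSf2 : (Sf.erase j1).Nonempty := by
      rw [← Finset.card_pos, Finset.card_erase_of_mem hj1]; omega
    obtain ⟨j2, hj2e⟩ := hSf2
    have hj2 : j2 ∈ Sf := Finset.mem_of_mem_erase hj2e
    have hSf3 : ((Sf.erase j1).erase j2).Nonempty := by
      rw [← Finset.card_pos, Finset.card_erase_of_mem hj2e, Finset.card_erase_of_mem hj1]; omega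
    obtain ⟨j3, hj3e⟩ := hSf3
    have hj3 : j3 ∈ Sf := Finset.mem_of_mem_erase (Finset.mem_of_mem_erase hj3e)
    have hne21 : j2 ≠ j1 := Finset.ne_of_mem_erase hj2e
    have hne32 : j3 ≠ j2 := Finset.ne_of_mem_erase hj3e
    have hne31 : j3 ≠ j1 := Finset.ne_of_mem_erase (Finset.mem_of_mem_erase hj3e)
    have hSfprop : ∀ j ∈ Sf, (t + 1 ≤ j ∧ j ≤ n) ∧
        mu a 1 - lam a t b < (a j : ℝ) ∧ (a j : ℝ) ≤ mu a 1 - lam a t b + rho a t b 1 := by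
      intro j hj
      obtain ⟨hj1', hj2'⟩ := Finset.mem_filter.mp hj
      exact ⟨Finset.mem_Icc.mp hj1', hj2'⟩
    -- classification of all out-of-cover items
    have hclassall : ∀ j : ℕ, ∃ h : ℕ, t + 1 ≤ j → j ≤ n →
        h ≤ t - 1 ∧
        ((mu a h - lam a t b + rho a t b h < (a j : ℝ) ∧
            (a j : ℝ) ≤ mu a (h + 1) - lam a t b) ∨
         (1 ≤ h ∧ mu a h - lam a t b < (a j : ℝ) ∧
            (a j : ℝ) ≤ mu a h - lam a t b + rho a t b h)) := by
      intro j
      by_cases hj : t + 1 ≤ j ∧ j ≤ n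
      · have h0 : 0 < a j := hposn j (by omega) hj.2
        have hb2 : (a j : ℝ) ≤ mu a t - lam a t b := by
          have := halb j (by omega) hj.2
          have hcst : ((a j : ℕ) : ℝ) ≤ (b : ℝ) := by exact_mod_cast this
          rw [hbmu] at hcst; exact hcst
        obtain ⟨h, hh1, hh2⟩ := classify t b a (by omega) hlam_pos (a j)
          (by exact_mod_cast h0) hb2
        exact ⟨h, fun _ _ => ⟨hh1, hh2⟩⟩
      · exact ⟨0, fun h1 h2 => absurd ⟨h1, h2⟩ hj⟩
    choose f hfc using hclassall
    -- S-classification predicate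
    set SS : ℕ → Prop := fun j => 1 ≤ f j ∧
      mu a (f j) - lam a t b < (a j : ℝ) ∧
      (a j : ℝ) ≤ mu a (f j) - lam a t b + rho a t b (f j) with hSS
    set sig : ℕ → ℕ := fun j => if j = j1 then j2 else if j = j2 then j3 else j1 with hsig
    have hsig_mem : ∀ j, sig j ∈ Sf := by
      intro j; simp only [hsig]
      split
      · exact hj2
      · split
        · exact hj3
        · exact hj1
    have hsig_ne : ∀ j, sig j ≠ j := by
      intro j; simp only [hsig]
      split
      · omega
      · split
        · omega
        · rename_i h1 h2
          intro hcon
          exact h1 hcon.symm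
    -- the point supports
    set KK : Fin n → Finset ℕ := fun i =>
      if i.val + 1 ≤ t then (Finset.Icc 1 t).erase (i.val + 1)
      else (if SS (i.val + 1) then
        insert (i.val + 1) (insert (sig (i.val + 1)) (Finset.Icc (f (i.val + 1) + 2) t))
      else insert (i.val + 1) (Finset.Icc (f (i.val + 1) + 2) t)) with hKK
    set xs : Fin n → Fin n → ℝ := fun i j => if (j.val + 1) ∈ KK i then 1 else 0 with hxs
    have hxs01 : ∀ i j, xs i j = 0 ∨ xs i j = 1 := by
      intro i j; simp only [hxs]; split
      · right; rfl
      · left; rfl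
    -- generic sum facts
    have htail_a : ∀ h : ℕ, h + 1 ≤ t →
        ∑ k ∈ Finset.Icc (h + 2) t, (a k : ℝ) = mu a t - mu a (h + 1) := by
      intro h hh
      have := sum_tail a (h + 1) t hh
      simpa using this
    have hcone : ∀ k, k ≤ t → c k = 1 := by
      intro k hk; simp only [hc]; rw [if_pos hk]
    have htail_c : ∀ h : ℕ, h + 1 ≤ t →
        ∑ k ∈ Finset.Icc (h + 2) t, c k = (t : ℝ) - (h : ℝ) - 1 := by
      intro h hh
      rw [Finset.sum_congr rfl (fun k hk => hcone k (Finset.mem_Icc.mp hk).2)]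
      rw [Finset.sum_const, Nat.card_Icc]
      have : t + 1 - (h + 2) = t - h - 1 := by omega
      rw [this]
      have hcst : ((t - h - 1 : ℕ) : ℝ) = (t : ℝ) - (h : ℝ) - 1 := by
        have h2 : t - h - 1 + (h + 1) = t := by omega
        have h3 := congrArg (fun m : ℕ => (m : ℝ)) h2
        push_cast at h3
        linarith
      rw [nsmul_eq_mul, hcst, mul_one]
    -- subset bounds for supports
    have hKsub2 : ∀ i : Fin n, ∀ k ∈ KK i, 1 ≤ k ∧ k ≤ n := by
      intro i k hk
      simp only [hKK] at hk
      split at hk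
      · have := Finset.mem_of_mem_erase hk
        rw [Finset.mem_Icc] at this; omega
      · split at hk
        · rcases Finset.mem_insert.mp hk with rfl | hk2
          · have := i.isLt; omega
          · rcases Finset.mem_insert.mp hk2 with heq | hk3
            · subst heq
              have := (hSfprop _ (hsig_mem (i.val + 1))).1; omega
            · rw [Finset.mem_Icc] at hk3; omega
        · rcases Finset.mem_insert.mp hk with rfl | hk3
          · have := i.isLt; omega
          · rw [Finset.mem_Icc] at hk3; omega
    have hsum_a : ∀ i : Fin n,
        ∑ j : Fin n, (a (j.val + 1) : ℝ) * xs i j = ∑ k ∈ KK i, (a k : ℝ) := by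
      intro i
      simp only [hxs]
      exact indic_sum n (KK i) (hKsub2 i) (fun k => (a k : ℝ))
    have hsum_c : ∀ i : Fin n,
        ∑ j : Fin n, (if (j : ℕ) + 1 ≤ t then (1:ℝ) else gPC (a ((j : ℕ) + 1))) * xs i j
          = ∑ k ∈ KK i, c k := by
      intro i
      simp only [hxs]
      exact indic_sum n (KK i) (hKsub2 i) c
    -- per point properties
    have hpts : ∀ i : Fin n, (∀ j, xs i j = 0 ∨ xs i j = 1) ∧
        (∑ j : Fin n, (a ((j : ℕ) + 1) : ℝ) * xs i j) ≤ (b : ℝ) ∧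
        (∑ j : Fin n,
          (if (j : ℕ) + 1 ≤ t then 1 else gPC (a ((j : ℕ) + 1))) * xs i j) = (t : ℝ) - 1 := by
      intro i
      refine ⟨hxs01 i, ?_⟩
      by_cases hcov : i.val + 1 ≤ t
      · -- cover point
        have hKi : KK i = (Finset.Icc 1 t).erase (i.val + 1) := by
          simp only [hKK]; rw [if_pos hcov]
        have hmem : (i.val + 1) ∈ Finset.Icc 1 t := Finset.mem_Icc.mpr ⟨by omega, hcov⟩
        have hsa : ∑ k ∈ KK i, (a k : ℝ) = mu a t - (a (i.val + 1) : ℝ) := by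
          rw [hKi]
          have h1 := Finset.add_sum_erase (Finset.Icc 1 t) (fun k => (a k : ℝ)) hmem
          have h2 : ∑ k ∈ Finset.Icc 1 t, (a k : ℝ) = mu a t := rfl
          linarith
        have hsc : ∑ k ∈ KK i, c k = (t : ℝ) - 1 := by
          rw [hKi]
          rw [Finset.sum_congr rfl (fun k hk =>
            hcone k (Finset.mem_Icc.mp (Finset.mem_of_mem_erase hk)).2)]
          rw [Finset.sum_const, Finset.card_erase_of_mem hmem, Nat.card_Icc, nsmul_eq_mul, mul_one]
          have h2 : t + 1 - 1 - 1 = t - 1 := by omega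
          rw [h2, Nat.cast_sub (show 1 ≤ t by omega)]
          norm_num
        constructor
        · rw [hsum_a i, hsa]
          have := hlam_le (i.val + 1) (by omega) hcov
          rw [hbmu]; linarith
        · rw [hsum_c i, hsc]
      · -- out-of-cover point
        have hj0t : t + 1 ≤ i.val + 1 := by omega
        have hj0n : i.val + 1 ≤ n := i.isLt
        obtain ⟨hft, hdisj⟩ := hfc (i.val + 1) hj0t hj0n
        have hh1t : f (i.val + 1) + 1 ≤ t := by omega
        have hj0tail : (i.val + 1) ∉ Finset.Icc (f (i.val + 1) + 2) t := by
          rw [Finset.mem_Icc]; omega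
        by_cases hS : SS (i.val + 1)
        · -- S point
          obtain ⟨hf1, hS1, hS2⟩ := hS
          have hS' : SS (i.val + 1) := ⟨hf1, hS1, hS2⟩
          have hKi : KK i = insert (i.val + 1)
              (insert (sig (i.val + 1)) (Finset.Icc (f (i.val + 1) + 2) t)) := by
            simp only [hKK]; rw [if_neg hcov, if_pos hS']
          obtain ⟨⟨hst, hsn⟩, hs1, hs2⟩ := hSfprop _ (hsig_mem (i.val + 1))
          have hsne : sig (i.val + 1) ≠ i.val + 1 := hsig_ne (i.val + 1)
          have hsstail : sig (i.val + 1) ∉ Finset.Icc (f (i.val + 1) + 2) t := by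
            rw [Finset.mem_Icc]; omega
          have hj0ins : (i.val + 1) ∉ insert (sig (i.val + 1))
              (Finset.Icc (f (i.val + 1) + 2) t) := by
            rw [Finset.mem_insert]
            push_neg
            exact ⟨fun hcc => hsne hcc.symm, hj0tail⟩
          have hrhoh : rho a t b (f (i.val + 1)) =
              (a (f (i.val + 1) + 1) : ℝ) - (a 1 : ℝ) + lam a t b := by
            apply rho_pos_eq
            have := (hScond (i.val + 1) hj0t hj0n (f (i.val + 1)) hf1 hft hS1 hS2).1
            linarith
          have hupper := (hScond (i.val + 1) hj0t hj0n (f (i.val + 1)) hf1 hft hS1 hS2).2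
          have hupperS := (hScond (sig (i.val + 1)) hst hsn 1 le_rfl (by omega) hs1 hs2).2
          have hmusucc : mu a (f (i.val + 1) + 1)
              = mu a (f (i.val + 1)) + (a (f (i.val + 1) + 1) : ℝ) := mu_succ a _
          have hgj0 : c (i.val + 1) = (f (i.val + 1) : ℝ) - 1/2 := by
            simp only [hc]
            rw [if_neg (by omega)]
            exact hPS _ hf1 hft _ hS1 hS2
          have hgsig : c (sig (i.val + 1)) = 1 - 1/2 := by
            simp only [hc]
            rw [if_neg (by omega)]
            have := hPS 1 le_rfl (by omega) _ hs1 hs2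
            rw [this]; norm_num
          constructor
          · rw [hsum_a i, hKi, Finset.sum_insert hj0ins, Finset.sum_insert hsstail,
              htail_a _ hh1t, hbmu]
            rw [hrho1eq, hmu1] at hupperS
            rw [hrhoh] at hupper
            linarith
          · rw [hsum_c i, hKi, Finset.sum_insert hj0ins, Finset.sum_insert hsstail,
              htail_c _ hh1t, hgj0, hgsig]
            ring
        · -- F point
          rcases hdisj with ⟨hF1, hF2⟩ | hSprop
          · have hKi : KK i = insert (i.val + 1) (Finset.Icc (f (i.val + 1) + 2) t) := by
              simp only [hKK]; rw [if_neg hcov, if_neg hS]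
            have hgj0 : c (i.val + 1) = (f (i.val + 1) : ℝ) := by
              simp only [hc]
              rw [if_neg (by omega)]
              exact hPF _ hft _ hF1 hF2
            constructor
            · rw [hsum_a i, hKi, Finset.sum_insert hj0tail, htail_a _ hh1t, hbmu]
              linarith
            · rw [hsum_c i, hKi, Finset.sum_insert hj0tail, htail_c _ hh1t, hgj0]
              ring
          · exact absurd hSprop hS
    -- affine independence
    obtain ⟨⟨hj1t, hj1n⟩, hj1S⟩ := hSfprop j1 hj1
    obtain ⟨⟨hj2t, hj2n⟩, hj2S⟩ := hSfprop j2 hj2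
    obtain ⟨⟨hj3t, hj3n⟩, hj3S⟩ := hSfprop j3 hj3
    set cf1 : Fin n := ⟨j1 - 1, by omega⟩ with hcf1
    set cf2 : Fin n := ⟨j2 - 1, by omega⟩ with hcf2
    set cf3 : Fin n := ⟨j3 - 1, by omega⟩ with hcf3
    have hcf1v : cf1.val + 1 = j1 := by simp only [hcf1]; omega
    have hcf2v : cf2.val + 1 = j2 := by simp only [hcf2]; omega
    have hcf3v : cf3.val + 1 = j3 := by simp only [hcf3]; omega
    have hcfne12 : cf1 ≠ cf2 := by
      intro hcc; apply hne21
      have : cf1.val = cf2.val := by rw [hcc]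
      omega
    have hcfne23 : cf2 ≠ cf3 := by
      intro hcc; apply hne32
      have : cf2.val = cf3.val := by rw [hcc]
      omega
    have hcfne31 : cf3 ≠ cf1 := by
      intro hcc; apply hne31
      have : cf3.val = cf1.val := by rw [hcc]
      omega
    -- xs basic evaluation lemmas
    have hself : ∀ jc : Fin n, ¬(jc.val + 1 ≤ t) → xs jc jc = 1 := by
      intro jc hjc
      have hm : (jc.val + 1) ∈ KK jc := by
        simp only [hKK]; rw [if_neg hjc]
        split <;> exact Finset.mem_insert_self _ _
      simp only [hxs]; rw [if_pos hm]
    have hcovmem : ∀ i jc : Fin n, i.val + 1 ≤ t → ¬(jc.val + 1 ≤ t) → xs i jc = 0 := by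
      intro i jc hi hjc
      simp only [hxs]; rw [if_neg]
      simp only [hKK]; rw [if_pos hi]
      intro hm
      have := Finset.mem_of_mem_erase hm
      rw [Finset.mem_Icc] at this; omega
    have hsigval : ∀ q : ℕ, sig q = j2 ∨ sig q = j3 ∨ sig q = j1 := by
      intro q; simp only [hsig]
      split
      · exact Or.inl rfl
      · split
        · exact Or.inr (Or.inl rfl)
        · exact Or.inr (Or.inr rfl)
    have houtmem : ∀ i jc : Fin n, ¬(i.val + 1 ≤ t) → ¬(jc.val + 1 ≤ t) →
        jc.val + 1 ≠ i.val + 1 → jc.val + 1 ≠ sig (i.val + 1) → xs i jc = 0 := by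
      intro i jc hi hjc h1 h2
      simp only [hxs]; rw [if_neg]
      simp only [hKK]; rw [if_neg hi]
      split
      · intro hm
        rcases Finset.mem_insert.mp hm with heq | hm2
        · exact h1 heq
        · rcases Finset.mem_insert.mp hm2 with heq | hm3
          · exact h2 heq
          · rw [Finset.mem_Icc] at hm3; omega
      · intro hm
        rcases Finset.mem_insert.mp hm with heq | hm3
        · exact h1 heq
        · rw [Finset.mem_Icc] at hm3; omega
    have haff : AffineIndependent ℝ xs := by
      rw [affineIndependent_iff_of_fintype]
      intro w hw0 hwv
      rw [Finset.weightedVSub_eq_linear_combination _ hw0] at hwv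
      have hcoord : ∀ jc : Fin n, ∑ i : Fin n, w i * xs i jc = 0 := by
        intro jc
        have h1 := congrFun hwv jc
        rw [Finset.sum_apply] at h1
        simpa [smul_eq_mul] using h1
      -- stage A: out-of-cover coordinates away from the triple
      have hstageA : ∀ jc : Fin n, ¬(jc.val + 1 ≤ t) →
          jc.val + 1 ≠ j1 → jc.val + 1 ≠ j2 → jc.val + 1 ≠ j3 → w jc = 0 := by
        intro jc hjc hn1 hn2 hn3
        have hs := hcoord jc
        rw [Finset.sum_eq_single jc (fun i _ hne => ?_)
          (fun hni => absurd (Finset.mem_univ jc) hni)] at hs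
        · rw [hself jc hjc] at hs; linarith
        · by_cases hi : i.val + 1 ≤ t
          · rw [hcovmem i jc hi hjc]; ring
          · have hds : jc.val + 1 ≠ sig (i.val + 1) := by
              rcases hsigval (i.val + 1) with hv | hv | hv <;> rw [hv] <;> assumption
            have hdi : jc.val + 1 ≠ i.val + 1 := by
              intro hcc
              exact hne (Fin.val_injective (by omega))
            rw [houtmem i jc hi hjc hdi hds]; ring
      -- pair reduction
      have hpair : ∀ p q : Fin n, p ≠ q →
          (∀ i : Fin n, i ≠ p → i ≠ q → w i * xs i q = 0) →
          w p * xs p q + w q * xs q q = 0 := by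
        intro p q hpq hz
        have hsub : ({p, q} : Finset (Fin n)) ⊆ Finset.univ := Finset.subset_univ _
        have hzz : ∀ i ∈ Finset.univ, i ∉ ({p, q} : Finset (Fin n)) → w i * xs i q = 0 := by
          intro i _ hni
          rw [Finset.mem_insert, Finset.mem_singleton] at hni
          push_neg at hni
          exact hz i hni.1 hni.2
        have := (Finset.sum_subset hsub hzz).trans (hcoord q)
        rw [Finset.sum_pair hpq] at this
        exact this
      have hout1 : ¬(cf1.val + 1 ≤ t) := by omega
      have hout2 : ¬(cf2.val + 1 ≤ t) := by omega
      have hout3 : ¬(cf3.val + 1 ≤ t) := by omega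
      have hsig1 : sig j1 = j2 := by simp [hsig]
      have hsig2 : sig j2 = j3 := by simp [hsig, hne21]
      have hsig3 : sig j3 = j1 := by simp [hsig, hne31, hne32]
      -- the three coordinate equations
      have hE2 : w cf1 * xs cf1 cf2 + w cf2 * xs cf2 cf2 = 0 := by
        apply hpair cf1 cf2 hcfne12
        intro i hi1 hi2
        by_cases hi : i.val + 1 ≤ t
        · rw [hcovmem i cf2 hi hout2]; ring
        · by_cases hi3 : i = cf3
          · subst hi3
            rw [houtmem cf3 cf2 hi hout2 (by omega) (by rw [hcf3v, hsig3, hcf2v]; omega)]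
            ring
          · have : w i = 0 := by
              apply hstageA i hi
              · intro hcc; exact hi3 (Fin.val_injective (by omega))
                <;> skip
              · intro hcc; exact hi1 (Fin.val_injective (by omega))
              · intro hcc; exact hi2 (Fin.val_injective (by omega))
            rw [this]; ring
      have hE3 : w cf2 * xs cf2 cf3 + w cf3 * xs cf3 cf3 = 0 := by
        apply hpair cf2 cf3 hcfne23
        intro i hi1 hi2
        by_cases hi : i.val + 1 ≤ t
        · rw [hcovmem i cf3 hi hout3]; ring
        · by_cases hi3 : i = cf1
          · subst hi3
            rw [houtmem cf1 cf3 hi hout3 (by omega) (by rw [hcf1v, hsig1, hcf3v]; omega)]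
            ring
          · have : w i = 0 := by
              apply hstageA i hi
              · intro hcc; exact hi3 (Fin.val_injective (by omega))
              · intro hcc; exact hi1 (Fin.val_injective (by omega))
              · intro hcc; exact hi2 (Fin.val_injective (by omega))
            rw [this]; ring
      have hE1 : w cf3 * xs cf3 cf1 + w cf1 * xs cf1 cf1 = 0 := by
        apply hpair cf3 cf1 hcfne31
        intro i hi1 hi2
        by_cases hi : i.val + 1 ≤ t
        · rw [hcovmem i cf1 hi hout1]; ring
        · by_cases hi3 : i = cf2
          · subst hi3
            rw [houtmem cf2 cf1 hi hout1 (by omega) (by rw [hcf2v, hsig2, hcf1v]; omega)]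
            ring
          · have : w i = 0 := by
              apply hstageA i hi
              · intro hcc; exact hi2 (Fin.val_injective (by omega))
              · intro hcc; exact hi3 (Fin.val_injective (by omega))
              · intro hcc; exact hi1 (Fin.val_injective (by omega))
            rw [this]; ring
      rw [hself cf1 hout1] at hE1
      rw [hself cf2 hout2] at hE2
      rw [hself cf3 hout3] at hE3
      have hw1 : w cf1 = 0 ∧ w cf2 = 0 ∧ w cf3 = 0 := by
        rcases hxs01 cf1 cf2 with he1 | he1 <;> rw [he1] at hE2 <;>
        rcases hxs01 cf2 cf3 with he2 | he2 <;> rw [he2] at hE3 <;>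
        rcases hxs01 cf3 cf1 with he3 | he3 <;> rw [he3] at hE1 <;>
        refine ⟨by linarith, by linarith, by linarith⟩
      have hwout : ∀ i : Fin n, ¬(i.val + 1 ≤ t) → w i = 0 := by
        intro i hi
        by_cases h1 : i.val + 1 = j1
        · have : i = cf1 := Fin.val_injective (by omega)
          rw [this]; exact hw1.1
        · by_cases h2 : i.val + 1 = j2
          · have : i = cf2 := Fin.val_injective (by omega)
            rw [this]; exact hw1.2.1
          · by_cases h3 : i.val + 1 = j3
            · have : i = cf3 := Fin.val_injective (by omega)
              rw [this]; exact hw1.2.2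
            · exact hstageA i hi h1 h2 h3
      -- stage C: cover coordinates
      set CS : Finset (Fin n) := Finset.univ.filter (fun i : Fin n => i.val + 1 ≤ t) with hCS
      have hCS0 : ∑ i ∈ CS, w i = 0 := by
        have h1 : ∀ i ∈ Finset.univ, i ∉ CS → w i = 0 := by
          intro i _ hni
          apply hwout i
          intro hcc
          exact hni (Finset.mem_filter.mpr ⟨Finset.mem_univ _, hcc⟩)
        exact (Finset.sum_subset (Finset.subset_univ CS) h1).trans hw0
      have hcovzero : ∀ jc : Fin n, jc.val + 1 ≤ t → w jc = 0 := by
        intro jc hjc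
        have hjcCS : jc ∈ CS := Finset.mem_filter.mpr ⟨Finset.mem_univ _, hjc⟩
        have hz : ∀ i ∈ Finset.univ, i ∉ CS.erase jc → w i * xs i jc = 0 := by
          intro i _ hni
          by_cases hic : i.val + 1 ≤ t
          · have hiCS : i ∈ CS := Finset.mem_filter.mpr ⟨Finset.mem_univ _, hic⟩
            have hij : i = jc := by
              by_contra hcc
              exact hni (Finset.mem_erase.mpr ⟨hcc, hiCS⟩)
            subst hij
            have : xs i i = 0 := by
              simp only [hxs]; rw [if_neg]
              simp only [hKK]; rw [if_pos hic]
              exact Finset.notMem_erase _ _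
            rw [this]; ring
          · rw [hwout i hic]; ring
        have h1 : ∑ i ∈ CS.erase jc, w i * xs i jc = 0 :=
          (Finset.sum_subset (Finset.subset_univ _) hz).trans (hcoord jc)
        have h2 : ∑ i ∈ CS.erase jc, w i * xs i jc = ∑ i ∈ CS.erase jc, w i := by
          apply Finset.sum_congr rfl
          intro i hi
          have hine : i ≠ jc := (Finset.mem_erase.mp hi).1
          have hic : i.val + 1 ≤ t :=
            (Finset.mem_filter.mp (Finset.mem_erase.mp hi).2).2
          have : xs i jc = 1 := by
            simp only [hxs]; rw [if_pos]
            simp only [hKK]; rw [if_pos hic]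
            apply Finset.mem_erase.mpr
            refine ⟨?_, Finset.mem_Icc.mpr ⟨by omega, hjc⟩⟩
            intro hcc
            exact hine (Fin.val_injective (by omega)).symm
          rw [this, mul_one]
        have h3 := Finset.add_sum_erase CS w hjcCS
        rw [h2] at h1
        linarith
      intro i
      by_cases hic : i.val + 1 ≤ t
      · exact hcovzero i hic
      · exact hwout i hic
    exact ⟨xs, haff, hpts⟩
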